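/- Let ρ = (q0,κ0) d1 i1/u1 … dn in/un d(n+1) (q,κ) be a padded timed run of an automaton with timers. Then the index sequences of the blocks of ρ form a partition of the set {1, …, n} of indices of the actions of ρ: every index 1 ≤ k ≤ n belongs to the sequence of exactly one block of ρ. -/

import Mathlib

set_option maxHeartbeats 1000000

namespace AwT

/-- Actions of an automaton with timers: reading an input, or processing the timeout of a timer. -/
inductive Act (I X : Type) where
  | input : I → Act I X
  | timeout : X → Act I X

/-- Updates: `some (x, c)` starts timer `x` with positive integer value `c`; `none` is `⊥`. -/
abbrev Upd (X : Type) := Option (X × ℕ+)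

/-- An automaton with timers (AT). `X` is the (finite) set of timers, `I` the (finite) set of
inputs, `Q` the (finite) set of states. -/
structure AT (X I Q : Type) [DecidableEq X] where
  q0 : Q
  χ : Q → Finset X
  δ : Q → Act I X → Option (Q × Upd X)
  init_active : χ q0 = ∅
  defined_iff : ∀ q a, (δ q a).isSome ↔
      (∃ i, a = Act.input i) ∨ (∃ x ∈ χ q, a = Act.timeout x)
  timeout_self : ∀ q x q' y c, δ q (Act.timeout x) = some (q', some (y, c)) → y = x
  noupdate_sub : ∀ q a q', δ q a = some (q', none) → χ q' ⊆ χ q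
  noupdate_timeout : ∀ q x q', δ q (Act.timeout x) = some (q', none) → x ∉ χ q'
  update_mem : ∀ q a q' x c, δ q a = some (q', some (x, c)) → x ∈ χ q'
  update_sub : ∀ q a q' x c, δ q a = some (q', some (x, c)) → χ q' \ {x} ⊆ χ q

variable {X I Q : Type} [DecidableEq X]

/-- A timed run `(q₀,κ₀) d₁ i₁/u₁ … dₙ iₙ/uₙ d_{n+1} (q,κ)` of an AT, with `n` discrete
transitions.  `states k` and `vals k` give the configuration before the `k`-th delay,
`delays k` is the `k`-th delay, and `acts k`/`upds k` are the `k`-th action and update. -/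
structure TimedRun (A : AT X I Q) (n : ℕ) where
  states : Fin (n+1) → Q
  vals : Fin (n+1) → X → ℝ
  delays : Fin (n+1) → ℝ
  acts : Fin n → Act I X
  upds : Fin n → Upd X
  init_state : states 0 = A.q0
  init_val : ∀ x, vals 0 x = 0
  delays_nonneg : ∀ k, 0 ≤ delays k
  delays_le : ∀ k, ∀ x ∈ A.χ (states k), delays k ≤ vals k x
  trans : ∀ k : Fin n, A.δ (states k.castSucc) (acts k) = some (states k.succ, upds k)
  timeout_zero : ∀ (k : Fin n) (x : X), acts k = Act.timeout x →
      vals k.castSucc x - delays k.castSucc = 0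
  val_step : ∀ (k : Fin n) (y : X),
      vals k.succ y = (upds k).elim (vals k.castSucc y - delays k.castSucc)
        (fun p => if y = p.1 then ((p.2 : ℕ) : ℝ) else vals k.castSucc y - delays k.castSucc)

variable {A : AT X I Q} {n : ℕ}

/-- A timed run is padded if its first and last delays are positive and no active timer has
value 0 in its last configuration. -/
def Padded (ρ : TimedRun A n) : Prop :=
  0 < ρ.delays 0 ∧ 0 < ρ.delays (Fin.last n) ∧
    ∀ x ∈ A.χ (ρ.states (Fin.last n)),
      ρ.vals (Fin.last n) x - ρ.delays (Fin.last n) ≠ 0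

/-- Timer fates of blocks: `⊥`, `●` (discarded at value zero), `×`. -/
inductive Fate where
  | bot | disc0 | cross
  deriving DecidableEq

/-- The transition at index `ℓ` discards the timer `x`: `x` is active before the transition,
the action is not `to[x]`, and the transition stops or restarts `x`. -/
def Discards (ρ : TimedRun A n) (ℓ : Fin n) (x : X) : Prop :=
  x ∈ A.χ (ρ.states ℓ.castSucc) ∧ ρ.acts ℓ ≠ Act.timeout x ∧
    (x ∉ A.χ (ρ.states ℓ.succ) ∨ ∃ c, ρ.upds ℓ = some (x, c))

/-- Action `k` triggers action `k'`. -/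
def Triggers (ρ : TimedRun A n) (k k' : Fin n) : Prop :=
  k < k' ∧ ∃ x c, ρ.upds k = some (x, c) ∧ ρ.acts k' = Act.timeout x ∧
    ∀ ℓ, k < ℓ → ℓ < k' → ρ.acts ℓ ≠ Act.timeout x ∧ ¬ Discards ρ ℓ x

/-- After action `k` (which restarts `x`), the first transition discarding `x` does so while the
value of `x` is zero. -/
def DiscardedAtZeroAfter (ρ : TimedRun A n) (k : Fin n) (x : X) : Prop :=
  ∃ ℓ, k < ℓ ∧ Discards ρ ℓ x ∧ (∀ m, k < m → m < ℓ → ¬ Discards ρ m x) ∧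
    ρ.vals ℓ.castSucc x - ρ.delays ℓ.castSucc = 0

/-- `γ` is the timer fate of a block whose index sequence is `ks`. -/
def FateOf (ρ : TimedRun A n) (ks : List (Fin n)) (γ : Fate) : Prop :=
  ∀ k, ks.getLast? = some k →
    ((ρ.upds k = none → γ = Fate.bot) ∧
     ∀ x c, ρ.upds k = some (x, c) →
        ((DiscardedAtZeroAfter ρ k x → γ = Fate.disc0) ∧
         (¬ DiscardedAtZeroAfter ρ k x → γ = Fate.cross)))

/-- `(ks, γ)` is a block of `ρ`: `ks` is a maximal chain of actions each triggering the next,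
starting with an input-action, and `γ` is its timer fate. -/
def IsBlock (ρ : TimedRun A n) (ks : List (Fin n)) (γ : Fate) : Prop :=
  ks ≠ [] ∧ List.Chain' (Triggers ρ) ks ∧
    (∀ k, ks.head? = some k → ∃ i, ρ.acts k = Act.input i) ∧
    (∀ k k', ks.getLast? = some k → ¬ Triggers ρ k k') ∧
    FateOf ρ ks γ

/-- The sum of the delays strictly between action `k` and action `k'` (for `k ≤ k'`). -/
def delayBetween (ρ : TimedRun A n) (k k' : Fin n) : ℝ :=
  ∑ ℓ ∈ Finset.Ioc k k', ρ.delays ℓ.castSucc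

/-- `B ≺ B'`: blocks `B` and `B'` participate in a race, witnessed either by an action of `B`
occurring before an action of `B'` with total delay zero in between, or by an action of `B`
being the first to discard the timer (re)started by the last action of `B'` while it has
value zero. -/
def Prec (ρ : TimedRun A n) (B B' : List (Fin n) × Fate) : Prop :=
  (∃ k ∈ B.1, ∃ k' ∈ B'.1, k < k' ∧ delayBetween ρ k k' = 0) ∨
  (B'.2 = Fate.disc0 ∧ ∃ k' x c, B'.1.getLast? = some k' ∧ ρ.upds k' = some (x, c) ∧
     ∃ ℓ ∈ B.1, k' < ℓ ∧ Discards ρ ℓ x ∧ ∀ m, k' < m → m < ℓ → ¬ Discards ρ m x)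

/-- Two blocks participate in a (common) race. -/
def BlocksRace (ρ : TimedRun A n) (B B' : List (Fin n) × Fate) : Prop :=
  Prec ρ B B' ∨ Prec ρ B' B

/-- The run contains a race. -/
def HasRace (ρ : TimedRun A n) : Prop :=
  ∃ B B' : List (Fin n) × Fate, IsBlock ρ B.1 B.2 ∧ IsBlock ρ B'.1 B'.2 ∧ B ≠ B' ∧
    BlocksRace ρ B B'

/-- The block graph of `ρ` (vertices: blocks, edges: `≺`) has a cycle. -/
def HasCycle (ρ : TimedRun A n) : Prop :=
  ∃ (m : ℕ) (f : Fin (m+1) → List (Fin n) × Fate),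
    0 < m ∧ (∀ j, IsBlock ρ (f j).1 (f j).2) ∧ f (Fin.last m) = f 0 ∧
      ∀ j : Fin m, Prec ρ (f j.castSucc) (f j.succ)

open Classical in
/-- The delays of `ρ` after shifting the block whose set of action indices is `S` by `ε`:
the delay preceding an action of the block whose predecessor is not in the block gains `ε`,
and the delay following an action of the block whose successor is not in the block loses `ε`. -/
noncomputable def wiggledDelay (ρ : TimedRun A n) (S : Set (Fin n)) (ε : ℝ)
    (j : Fin (n+1)) : ℝ :=
  ρ.delays j
    + (if (∃ k : Fin n, k.castSucc = j ∧ k ∈ S ∧ ∀ k' : Fin n, k'.succ = j → k' ∉ S)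
        then ε else 0)
    - (if (∃ k : Fin n, k.succ = j ∧ k ∈ S ∧ ∀ k' : Fin n, k'.castSucc = j → k' ∉ S)
        then ε else 0)

/-- `ρ'` is obtained from `ρ` by shifting the actions with indices in `S` by `ε`. -/
def WiggleSpec (ρ ρ' : TimedRun A n) (S : Set (Fin n)) (ε : ℝ) : Prop :=
  ρ'.states = ρ.states ∧ ρ'.acts = ρ.acts ∧ ρ'.upds = ρ.upds ∧
    ∀ j, ρ'.delays j = wiggledDelay ρ S ε j

/-- The untimed trace of a run: the alternating sequence of states and actions. -/
def untime (ρ : TimedRun A n) : List (Q × Act I X) × Q :=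
  (List.ofFn (fun k : Fin n => (ρ.states k.castSucc, ρ.acts k)), ρ.states (Fin.last n))

/-- The block with index sequence `ks` can be wiggled: for some `ε ≠ 0`, shifting it by `ε`
yields a padded timed run (with the same untimed trace) in which it participates in no race. -/
def CanWiggleBlock (ρ : TimedRun A n) (ks : List (Fin n)) : Prop :=
  ∃ ε : ℝ, ε ≠ 0 ∧ ∃ ρ' : TimedRun A n, WiggleSpec ρ ρ' {k | k ∈ ks} ε ∧ Padded ρ' ∧
    ∀ (γ₁ : Fate) (ks₂ : List (Fin n)) (γ₂ : Fate),
      IsBlock ρ' ks γ₁ → IsBlock ρ' ks₂ γ₂ → (ks, γ₁) ≠ (ks₂, γ₂) →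
        ¬ BlocksRace ρ' (ks, γ₁) (ks₂, γ₂)

/-- One wiggling step: wiggle a single block of `ρ`. -/
def WiggleStep (ρ ρ' : TimedRun A n) : Prop :=
  ∃ (ks : List (Fin n)) (γ : Fate) (ε : ℝ), ε ≠ 0 ∧ IsBlock ρ ks γ ∧
    WiggleSpec ρ ρ' {k | k ∈ ks} ε ∧ Padded ρ' ∧
    ∀ (γ₁ : Fate) (ks₂ : List (Fin n)) (γ₂ : Fate),
      IsBlock ρ' ks γ₁ → IsBlock ρ' ks₂ γ₂ → (ks, γ₁) ≠ (ks₂, γ₂) →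
        ¬ BlocksRace ρ' (ks, γ₁) (ks₂, γ₂)

/-- `ρ` can be wiggled: wiggling its blocks one at a time yields a race-free padded run with
the same untimed trace. -/
def Wigglable (ρ : TimedRun A n) : Prop :=
  ∃ ρ' : TimedRun A n, Relation.ReflTransGen WiggleStep ρ ρ' ∧ Padded ρ' ∧
    ¬ HasRace ρ' ∧ untime ρ' = untime ρ

/-- `A` is race-avoiding. -/
def RaceAvoiding (A : AT X I Q) : Prop :=
  ∀ (n : ℕ) (ρ : TimedRun A n), Padded ρ → HasRace ρ →
    ∃ (n' : ℕ) (ρ' : TimedRun A n'), Padded ρ' ∧ ¬ HasRace ρ' ∧ untime ρ' = untime ρ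

/-- All delays of the run are strictly positive. -/
def AllPos (ρ : TimedRun A n) : Prop := ∀ j, 0 < ρ.delays j

/-- `ks` is (the index sequence of) an `x`-block: its actions (re)start the timer `x`. -/
def IsXBlock (ρ : TimedRun A n) (ks : List (Fin n)) (x : X) : Prop :=
  ∃ k ∈ ks, ∃ c, ρ.upds k = some (x, c)

/-- Modified semantics from a total order on timers: in every race, any action of an `x`-block
is processed before any action of a `y`-block whenever `x < y`. -/
def OrderedSem [LT X] (ρ : TimedRun A n) : Prop :=
  ∀ (ks : List (Fin n)) (γ : Fate) (ks' : List (Fin n)) (γ' : Fate) (x y : X),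
    IsBlock ρ ks γ → IsBlock ρ ks' γ' → IsXBlock ρ ks x → IsXBlock ρ ks' y → x < y →
      ∀ k ∈ ks, ∀ k' ∈ ks',
        ((k < k' ∧ delayBetween ρ k k' = 0) ∨ (k' < k ∧ delayBetween ρ k' k = 0)) → k < k'

/-! ### Configurations, timer-equivalence and the region automaton -/

/-- Valuations `κ, κ'` (on the active timers of `q`) are timer-equivalent. -/
def ValEquiv (A : AT X I Q) (q : Q) (κ κ' : X → ℝ) : Prop :=
  ∀ x ∈ A.χ q, (⌊κ x⌋ = ⌊κ' x⌋) ∧ (Int.fract (κ x) = 0 ↔ Int.fract (κ' x) = 0) ∧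
    ∀ y ∈ A.χ q, (Int.fract (κ x) ≤ Int.fract (κ y) ↔ Int.fract (κ' x) ≤ Int.fract (κ' y))

/-- Timer-equivalence of configurations. -/
def ConfigEquiv (A : AT X I Q) (c c' : Q × (X → ℝ)) : Prop :=
  c.1 = c'.1 ∧ ValEquiv A c.1 c.2 c'.2

/-- A discrete transition between configurations, on action `a` with update `u`. -/
def DiscreteStep (A : AT X I Q) (c : Q × (X → ℝ)) (a : Act I X) (u : Upd X)
    (c' : Q × (X → ℝ)) : Prop :=
  A.δ c.1 a = some (c'.1, u) ∧ (∀ x, a = Act.timeout x → c.2 x = 0) ∧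
    ∀ y ∈ A.χ c'.1,
      c'.2 y = u.elim (c.2 y) (fun p => if y = p.1 then ((p.2 : ℕ) : ℝ) else c.2 y)

/-- A delay transition between configurations, of duration `d ≥ 0`. -/
def DelayStep (A : AT X I Q) (c : Q × (X → ℝ)) (d : ℝ) (c' : Q × (X → ℝ)) : Prop :=
  0 ≤ d ∧ c'.1 = c.1 ∧ (∀ x ∈ A.χ c.1, d ≤ c.2 x) ∧ ∀ x ∈ A.χ c.1, c'.2 x = c.2 x - d

/-- One step of a timed run between configurations: a delay or a discrete transition. -/
def Step (A : AT X I Q) (c c' : Q × (X → ℝ)) : Prop :=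
  (∃ d, DelayStep A c d c') ∨ (∃ a u, DiscreteStep A c a u c')

/-- One transition of the region automaton between the classes of `c` and `c'`:
some representatives are related by a positive delay (`τ`) or a discrete transition. -/
def RegStep (A : AT X I Q) (c c' : Q × (X → ℝ)) : Prop :=
  ∃ c₁ c₂, ConfigEquiv A c c₁ ∧ ConfigEquiv A c' c₂ ∧
    ((∃ d, 0 < d ∧ DelayStep A c₁ d c₂) ∨ ∃ a u, DiscreteStep A c₁ a u c₂)

/-! ### The extended run and relative elapsed time -/

open Classical in
/-- The timers discarded by the transition at index `k`. -/
noncomputable def discardedSet (ρ : TimedRun A n) (k : Fin n) : Finset X :=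
  (A.χ (ρ.states k.castSucc)).filter (fun x => Discards ρ k x)

/-- Positions of actions in the extended run of `ρ`: `(k, 0)` is the `k`-th action of `ρ`,
and `(k, j)` for `1 ≤ j` is the `j`-th zero-delay pseudo-action (`●` or `×`) inserted after
it, one for each timer it discards. -/
def EPos (ρ : TimedRun A n) : Type := {p : Fin n × ℕ // p.2 ≤ (discardedSet ρ p.1).card}

open Classical in
/-- Relative elapsed time between two positions of the extended run: the sum `d` of the delays
between them if the first occurs (weakly) before the second, and `-d` otherwise. -/
noncomputable def reltime (ρ : TimedRun A n) (p p' : EPos ρ) : ℝ :=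
  if p.1.1 < p'.1.1 ∨ (p.1.1 = p'.1.1 ∧ p.1.2 ≤ p'.1.2) then delayBetween ρ p.1.1 p'.1.1
  else - delayBetween ρ p'.1.1 p.1.1

end AwT

/-! ### Linear-bounded Turing machines -/

/-- A (nondeterministic) linear-bounded Turing machine with alphabet `σ` and states `Q`.
A transition `(q, α, α', D, q')` reads `α`, writes `α'` and moves left (`D = false`) or
right (`D = true`). -/
structure LBTM (σ Q : Type) where
  q0 : Q
  qF : Q
  T : Finset (Q × σ × σ × Bool × Q)

/-- One step of an LBTM on a tape of length `n`; configurations are (state, tape, head). -/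
def LBTMStep {σ Q : Type} (M : LBTM σ Q) {n : ℕ}
    (c c' : Q × (Fin n → σ) × Fin n) : Prop :=
  ∃ α' : σ, ∃ D : Bool, (c.1, c.2.1 c.2.2, α', D, c'.1) ∈ M.T ∧
    c'.2.1 = Function.update c.2.1 c.2.2 α' ∧
    ((D = true ∧ (c'.2.2 : ℕ) = (c.2.2 : ℕ) + 1) ∨
     (D = false ∧ (c.2.2 : ℕ) = (c'.2.2 : ℕ) + 1))

/-- `M` accepts the word `w`. -/
def LBTMAccepts {σ Q : Type} (M : LBTM σ Q) {n : ℕ} (hn : 0 < n) (w : Fin n → σ) : Prop :=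
  ∃ c : Q × (Fin n → σ) × Fin n,
    Relation.ReflTransGen (LBTMStep M) (M.q0, w, ⟨0, hn⟩) c ∧ c.1 = M.qF



/-! ### Auxiliary development for `blocks_partition` -/

namespace AwT

variable {X I Q : Type} [DecidableEq X] {A : AT X I Q} {n : ℕ}

lemma def_isSome (ρ : TimedRun A n) (k : Fin n) :
    (A.δ (ρ.states k.castSucc) (ρ.acts k)).isSome := by
  rw [ρ.trans k]; rfl

lemma timeout_active (ρ : TimedRun A n) (k : Fin n) (x : X)
    (h : ρ.acts k = Act.timeout x) : x ∈ A.χ (ρ.states k.castSucc) := by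
  rcases (A.defined_iff _ _).1 (def_isSome ρ k) with ⟨i, hi⟩ | ⟨y, hy, he⟩
  · rw [h] at hi; cases hi
  · rw [h] at he; cases he; exact hy

lemma step_keep (ρ : TimedRun A n) (m : Fin n) (x : X)
    (hx : x ∈ A.χ (ρ.states m.castSucc)) (hto : ρ.acts m ≠ Act.timeout x)
    (hnd : ¬ Discards ρ m x) :
    x ∈ A.χ (ρ.states m.succ) ∧ ∀ c, ρ.upds m ≠ some (x, c) := by
  unfold Discards at hnd
  push_neg at hnd
  exact hnd hx hto

lemma back_active (ρ : TimedRun A n) (m : Fin n) (x : X)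
    (hx : x ∈ A.χ (ρ.states m.succ)) (hu : ∀ c, ρ.upds m ≠ some (x, c)) :
    x ∈ A.χ (ρ.states m.castSucc) := by
  have ht := ρ.trans m
  cases hup : ρ.upds m with
  | none => rw [hup] at ht; exact A.noupdate_sub _ _ _ ht hx
  | some p =>
    obtain ⟨y, c⟩ := p
    rw [hup] at ht
    have hxy : x ≠ y := by rintro rfl; exact hu c hup
    exact A.update_sub _ _ _ _ _ ht (by simp [hx, hxy])

lemma upd_active (ρ : TimedRun A n) (k : Fin n) (x : X) (c : ℕ+)
    (hu : ρ.upds k = some (x, c)) : x ∈ A.χ (ρ.states k.succ) := by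
  have ht := ρ.trans k; rw [hu] at ht; exact A.update_mem _ _ _ _ _ ht

lemma persist_aux (ρ : TimedRun A n) (x : X) :
    ∀ (t : ℕ) (a k : Fin n), k.val = a.val + 1 + t → x ∈ A.χ (ρ.states a.succ) →
      (∀ m : Fin n, a < m → m < k → ρ.acts m ≠ Act.timeout x ∧ ¬ Discards ρ m x) →
      x ∈ A.χ (ρ.states k.castSucc) := by
  intro t
  induction t with
  | zero =>
    intro a k hk hx _
    have : k.castSucc = a.succ := Fin.ext (by simp [hk])
    rwa [this]
  | succ t ih =>
    intro a k hk hx hgood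
    have hk1 : k.val - 1 < n := by omega
    set k' : Fin n := ⟨k.val - 1, hk1⟩ with hk'def
    have hak' : a < k' := by rw [Fin.lt_def]; simp [hk'def]; omega
    have hk'k : k' < k := by rw [Fin.lt_def]; simp [hk'def]; omega
    have hxk' := ih a k' (by simp [hk'def]; omega) hx
      (fun m hm1 hm2 => hgood m hm1 (hm2.trans hk'k))
    obtain ⟨h1, h2⟩ := hgood k' hak' hk'k
    have hstep := (step_keep ρ k' x hxk' h1 h2).1
    have he : k'.succ = k.castSucc := Fin.ext (by simp [hk'def]; omega)
    rwa [he] at hstep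

lemma persist' (ρ : TimedRun A n) (x : X) (a k : Fin n) (hak : a < k)
    (hx : x ∈ A.χ (ρ.states a.succ))
    (hgood : ∀ m : Fin n, a < m → m < k → ρ.acts m ≠ Act.timeout x ∧ ¬ Discards ρ m x) :
    x ∈ A.χ (ρ.states k.castSucc) := by
  have hak' : a.val < k.val := hak
  exact persist_aux ρ x (k.val - a.val - 1) a k (by omega) hx hgood

lemma origin (ρ : TimedRun A n) (x : X) :
    ∀ (t : ℕ) (j : Fin (n+1)), j.val = t → x ∈ A.χ (ρ.states j) →
      ∀ j0 : Fin (n+1), j0 ≤ j → x ∉ A.χ (ρ.states j0) →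
      ∃ ℓ : Fin n, j0 ≤ ℓ.castSucc ∧ ℓ.succ ≤ j ∧ ∃ c, ρ.upds ℓ = some (x, c) := by
  intro t
  induction t with
  | zero =>
    intro j hj hx j0 hj0 hnx
    have : j0 = j := le_antisymm hj0 (by rw [Fin.le_def, hj]; omega)
    exact absurd (this ▸ hnx) (not_not_intro hx)
  | succ t ih =>
    intro j hj hx j0 hj0 hnx
    have hm : t < n := by have := j.isLt; omega
    set m : Fin n := ⟨t, hm⟩ with hmdef
    have hjm : j = m.succ := Fin.ext (by simp [hj, hmdef])
    have hj0j : j0 ≠ j := by rintro rfl; exact hnx hx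
    have hj0v : j0.val ≠ j.val := fun h => hj0j (Fin.ext h)
    have hj0m : j0 ≤ m.castSucc := by
      rw [Fin.le_def] at hj0 ⊢; simp [hmdef]; omega
    by_cases hux : ∃ c, ρ.upds m = some (x, c)
    · obtain ⟨c, hc⟩ := hux
      exact ⟨m, hj0m, by rw [hjm], c, hc⟩
    · push_neg at hux
      have hxm : x ∈ A.χ (ρ.states m.castSucc) :=
        back_active ρ m x (by rwa [hjm] at hx) hux
      obtain ⟨ℓ, h1, h2, h3⟩ := ih m.castSucc (by simp [hmdef]) hxm j0 hj0m hnx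
      refine ⟨ℓ, h1, le_trans h2 ?_, h3⟩
      rw [hjm]; exact (Fin.castSucc_lt_succ (i := m)).le

lemma exists_pred (ρ : TimedRun A n) (k : Fin n) (x : X)
    (hto : ρ.acts k = Act.timeout x) : ∃ j, Triggers ρ j k := by
  classical
  have hxk : x ∈ A.χ (ρ.states k.castSucc) := timeout_active ρ k x hto
  have hx0 : x ∉ A.χ (ρ.states 0) := by rw [ρ.init_state, A.init_active]; simp
  obtain ⟨ℓ0, _, hl2, hl3⟩ :=
    origin ρ x k.castSucc.val k.castSucc rfl hxk 0 (Fin.zero_le _) hx0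
  set S : Finset (Fin n) :=
    Finset.univ.filter (fun ℓ => ℓ < k ∧ ∃ c, ρ.upds ℓ = some (x, c)) with hS
  have hmemS : ∀ ℓ, ℓ ∈ S ↔ (ℓ < k ∧ ∃ c, ρ.upds ℓ = some (x, c)) := by
    intro ℓ; simp [hS]
  have hℓ0k : ℓ0 < k := by
    rw [Fin.le_def] at hl2; rw [Fin.lt_def]; simp at hl2; omega
  have hne : S.Nonempty := ⟨ℓ0, (hmemS ℓ0).2 ⟨hℓ0k, hl3⟩⟩
  set L := S.max' hne with hL
  have hLS := S.max'_mem hne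
  rw [hmemS] at hLS
  obtain ⟨hLk, c, hc⟩ := hLS
  refine ⟨L, hLk, x, c, hc, hto, ?_⟩
  by_contra hbad
  push_neg at hbad
  obtain ⟨m, hm1, hm2, hm3⟩ := hbad
  set T : Finset (Fin n) := Finset.univ.filter
    (fun m => L < m ∧ m < k ∧ ¬(ρ.acts m ≠ Act.timeout x ∧ ¬ Discards ρ m x)) with hT
  have hmT : m ∈ T := by
    simp only [hT, Finset.mem_filter, Finset.mem_univ, true_and]
    refine ⟨hm1, hm2, ?_⟩
    rintro ⟨h1, h2⟩
    exact h2 (hm3 h1)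
  have hTne : T.Nonempty := ⟨m, hmT⟩
  set m0 := T.min' hTne with hm0def
  have hm0 := T.min'_mem hTne
  simp only [hT, Finset.mem_filter, Finset.mem_univ, true_and] at hm0
  obtain ⟨hLm0, hm0k, hbad0⟩ := hm0
  have hgood : ∀ m' : Fin n, L < m' → m' < m0 →
      ρ.acts m' ≠ Act.timeout x ∧ ¬ Discards ρ m' x := by
    intro m' h1 h2
    by_contra hb
    have hmem : m' ∈ T := by
      simp only [hT, Finset.mem_filter, Finset.mem_univ, true_and]
      exact ⟨h1, h2.trans hm0k, hb⟩
    exact absurd (T.min'_le _ hmem) (not_le.mpr h2)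
  have hxL : x ∈ A.χ (ρ.states L.succ) := upd_active ρ L x c hc
  have hxm0 : x ∈ A.χ (ρ.states m0.castSucc) := persist' ρ x L m0 hLm0 hxL hgood
  have hnotS : ∀ ℓ : Fin n, m0 ≤ ℓ → ℓ < k → ∀ c', ρ.upds ℓ ≠ some (x, c') := by
    intro ℓ h1 h2 c' hc'
    have hmem : ℓ ∈ S := (hmemS ℓ).2 ⟨h2, c', hc'⟩
    exact absurd (S.le_max' ℓ hmem) (not_le.mpr (lt_of_lt_of_le hLm0 h1))
  have hre : x ∉ A.χ (ρ.states m0.succ) → False := by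
    intro hstop
    have hle : m0.succ ≤ k.castSucc := by
      rw [Fin.le_def]; simp; exact hm0k
    obtain ⟨ℓ', h1, h2, c'', hc''⟩ :=
      origin ρ x k.castSucc.val k.castSucc rfl hxk m0.succ hle hstop
    have hm0ℓ' : m0 ≤ ℓ' := by
      rw [Fin.le_def] at h1 ⊢; simp at h1; omega
    have hℓ'k : ℓ' < k := by
      rw [Fin.le_def] at h2; rw [Fin.lt_def]; simp at h2; omega
    exact hnotS ℓ' hm0ℓ' hℓ'k c'' hc''
  by_cases hta : ρ.acts m0 = Act.timeout x
  · have ht := ρ.trans m0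
    rw [hta] at ht
    cases hup : ρ.upds m0 with
    | none =>
      rw [hup] at ht
      exact hre (A.noupdate_timeout _ _ _ ht)
    | some p =>
      obtain ⟨y, c'⟩ := p
      rw [hup] at ht
      have hy := A.timeout_self _ _ _ _ _ ht
      exact hnotS m0 le_rfl hm0k c' (by rw [hup, hy])
  · have hd : Discards ρ m0 x := by
      by_contra hnd
      exact hbad0 ⟨hta, hnd⟩
    obtain ⟨-, -, hor⟩ := hd
    rcases hor with hstop | ⟨c', hc'⟩
    · exact hre hstop
    · exact hnotS m0 le_rfl hm0k c' hc'

lemma succ_unique_aux {ρ : TimedRun A n} {k k1 k2 : Fin n} (hlt : k1 < k2)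
    (h1 : Triggers ρ k k1) (h2 : Triggers ρ k k2) : False := by
  obtain ⟨ha1, x, c, hu, hax, _⟩ := h1
  obtain ⟨ha2, x', c', hu', hax', hcond⟩ := h2
  rw [hu] at hu'
  simp only [Option.some.injEq, Prod.mk.injEq] at hu'
  exact (hcond k1 ha1 hlt).1 (by rw [hax, hu'.1])

lemma succ_unique {ρ : TimedRun A n} {k k1 k2 : Fin n}
    (h1 : Triggers ρ k k1) (h2 : Triggers ρ k k2) : k1 = k2 := by
  by_contra hne
  rcases lt_or_gt_of_ne hne with h | h
  · exact succ_unique_aux h h1 h2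
  · exact succ_unique_aux h h2 h1

lemma pred_unique_aux {ρ : TimedRun A n} {k k1 k2 : Fin n} (hlt : k1 < k2)
    (h1 : Triggers ρ k1 k) (h2 : Triggers ρ k2 k) : False := by
  obtain ⟨ha1, x, c, hu, hax, hcond⟩ := h1
  obtain ⟨ha2, y, c', hu', hay, _⟩ := h2
  rw [hax] at hay
  have hxy : x = y := by injection hay
  subst hxy
  obtain ⟨hne2, hnd2⟩ := hcond k2 hlt ha2
  apply hnd2
  refine ⟨?_, hne2, Or.inr ⟨c', hu'⟩⟩
  exact persist' ρ x k1 k2 hlt (upd_active ρ k1 x c hu)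
    (fun m hm1 hm2 => hcond m hm1 (hm2.trans ha2))

lemma pred_unique {ρ : TimedRun A n} {k k1 k2 : Fin n}
    (h1 : Triggers ρ k1 k) (h2 : Triggers ρ k2 k) : k1 = k2 := by
  by_contra hne
  rcases lt_or_gt_of_ne hne with h | h
  · exact pred_unique_aux h h1 h2
  · exact pred_unique_aux h h2 h1

open Classical in
/-- Forward chain of a block from `k`. -/
noncomputable def fwd (ρ : TimedRun A n) (k : Fin n) : List (Fin n) :=
  if h : ∃ k', Triggers ρ k k' then k :: fwd ρ h.choose else [k]
termination_by n - k.val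
decreasing_by
  have h2 : k < h.choose := h.choose_spec.1
  have h3 : k.val < h.choose.val := h2
  have := h.choose.isLt
  omega

open Classical in
/-- Backward chain of a block up to (excluding) `k`. -/
noncomputable def bwd (ρ : TimedRun A n) (k : Fin n) : List (Fin n) :=
  if h : ∃ j, Triggers ρ j k then bwd ρ h.choose ++ [h.choose] else []
termination_by k.val
decreasing_by
  have h2 : h.choose < k := h.choose_spec.1
  exact h2

lemma fwd_eq_of_trig {ρ : TimedRun A n} {k k' : Fin n} (h : Triggers ρ k k') :
    fwd ρ k = k :: fwd ρ k' := by
  rw [fwd]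
  have hex : ∃ k'', Triggers ρ k k'' := ⟨k', h⟩
  rw [dif_pos hex]
  rw [succ_unique hex.choose_spec h]

lemma fwd_eq_of_no {ρ : TimedRun A n} {k : Fin n} (h : ∀ k', ¬ Triggers ρ k k') :
    fwd ρ k = [k] := by
  rw [fwd, dif_neg (not_exists.mpr h)]

lemma bwd_eq_of_trig {ρ : TimedRun A n} {j k : Fin n} (h : Triggers ρ j k) :
    bwd ρ k = bwd ρ j ++ [j] := by
  rw [bwd]
  have hex : ∃ j', Triggers ρ j' k := ⟨j, h⟩
  rw [dif_pos hex]
  rw [pred_unique hex.choose_spec h]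

lemma bwd_eq_of_no {ρ : TimedRun A n} {k : Fin n} (h : ∀ j, ¬ Triggers ρ j k) :
    bwd ρ k = [] := by
  rw [bwd, dif_neg (not_exists.mpr h)]

lemma fwd_cons (ρ : TimedRun A n) (k : Fin n) : ∃ t, fwd ρ k = k :: t := by
  by_cases h : ∃ k', Triggers ρ k k'
  · obtain ⟨k', hk'⟩ := h
    exact ⟨fwd ρ k', fwd_eq_of_trig hk'⟩
  · push_neg at h
    exact ⟨[], fwd_eq_of_no h⟩

lemma fwd_ne_nil (ρ : TimedRun A n) (k : Fin n) : fwd ρ k ≠ [] := by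
  obtain ⟨t, ht⟩ := fwd_cons ρ k
  simp [ht]

lemma fwd_head (ρ : TimedRun A n) (k : Fin n) : (fwd ρ k).head? = some k := by
  obtain ⟨t, ht⟩ := fwd_cons ρ k
  simp [ht]

lemma fwd_chain (ρ : TimedRun A n) (k : Fin n) : List.Chain' (Triggers ρ) (fwd ρ k) := by
  by_cases h : ∃ k', Triggers ρ k k'
  · obtain ⟨k', hk'⟩ := h
    rw [fwd_eq_of_trig hk']
    have ih := fwd_chain ρ k'
    unfold List.Chain'; rw [List.isChain_cons]
    refine ⟨?_, ih⟩
    intro b hb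
    rw [fwd_head ρ k'] at hb
    cases hb
    exact hk'
  · push_neg at h
    rw [fwd_eq_of_no h]
    exact List.isChain_singleton k
termination_by n - k.val
decreasing_by
  have h3 : k.val < k'.val := hk'.1
  have := k'.isLt
  omega

lemma fwd_last_max (ρ : TimedRun A n) (k : Fin n) :
    ∀ l, (fwd ρ k).getLast? = some l → ∀ k', ¬ Triggers ρ l k' := by
  by_cases h : ∃ k', Triggers ρ k k'
  · obtain ⟨k', hk'⟩ := h
    intro l hl
    rw [fwd_eq_of_trig hk'] at hl
    obtain ⟨t, ht⟩ := fwd_cons ρ k'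
    rw [ht] at hl
    rw [List.getLast?_cons_cons] at hl
    rw [← ht] at hl
    exact fwd_last_max ρ k' l hl
  · push_neg at h
    intro l hl
    rw [fwd_eq_of_no h] at hl
    simp at hl
    cases hl
    exact h
termination_by n - k.val
decreasing_by
  have h3 : k.val < k'.val := hk'.1
  have := k'.isLt
  omega

lemma fwd_canonical (ρ : TimedRun A n) :
    ∀ (B : List (Fin n)) (k : Fin n), List.Chain' (Triggers ρ) (k :: B) →
      (∀ l, (k :: B).getLast? = some l → ∀ k', ¬ Triggers ρ l k') →
      k :: B = fwd ρ k := by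
  intro B
  induction B with
  | nil =>
    intro k _ hmax
    rw [fwd_eq_of_no (hmax k rfl)]
  | cons b B' ih =>
    intro k hch hmax
    unfold List.Chain' at hch; rw [List.isChain_cons_cons] at hch
    rw [fwd_eq_of_trig hch.1]
    congr 1
    refine ih b hch.2 ?_
    intro l hl
    exact hmax l (by rw [List.getLast?_cons_cons]; exact hl)

lemma bwd_chain_app (ρ : TimedRun A n) (k : Fin n) :
    List.Chain' (Triggers ρ) (bwd ρ k ++ [k]) := by
  by_cases h : ∃ j, Triggers ρ j k
  · obtain ⟨j, hj⟩ := h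
    rw [bwd_eq_of_trig hj]
    have ih := bwd_chain_app ρ j
    unfold List.Chain'; rw [List.isChain_append]
    refine ⟨ih, List.isChain_singleton k, ?_⟩
    intro a ha b hb'
    rw [List.getLast?_concat] at ha
    cases ha
    cases hb'
    exact hj
  · push_neg at h
    rw [bwd_eq_of_no h]
    exact List.isChain_singleton k
termination_by k.val
decreasing_by
  exact hj.1

lemma bwd_head_input (ρ : TimedRun A n) (k : Fin n) :
    ∀ h, (bwd ρ k ++ [k]).head? = some h → ∃ i, ρ.acts h = Act.input i := by
  by_cases hp : ∃ j, Triggers ρ j k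
  · obtain ⟨j, hj⟩ := hp
    intro h hh
    rw [bwd_eq_of_trig hj, List.append_assoc] at hh
    have hne : bwd ρ j ++ [j] ≠ [] := by simp
    rw [← List.append_assoc] at hh
    rw [List.head?_append_of_ne_nil _ hne] at hh
    exact bwd_head_input ρ j h hh
  · push_neg at hp
    intro h hh
    rw [bwd_eq_of_no hp] at hh
    simp only [List.nil_append, List.head?_cons, Option.some.injEq] at hh
    subst hh
    cases hact : ρ.acts k with
    | input i => exact ⟨i, rfl⟩
    | timeout x => exact absurd (exists_pred ρ k x hact) (by simpa using hp)
termination_by k.val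
decreasing_by
  exact hj.1

lemma bwd_canonical (ρ : TimedRun A n) :
    ∀ (N : ℕ) (Al : List (Fin n)) (k : Fin n), Al.length = N →
      List.Chain' (Triggers ρ) (Al ++ [k]) →
      (∀ h, (Al ++ [k]).head? = some h → ∃ i, ρ.acts h = Act.input i) →
      Al = bwd ρ k := by
  intro N
  induction N with
  | zero =>
    intro Al k hlen _ hhead
    rw [List.length_eq_zero_iff] at hlen
    subst hlen
    rw [bwd_eq_of_no]
    intro j hj
    obtain ⟨x, c, hu, hax, -⟩ := hj.2
    obtain ⟨i, hi⟩ := hhead k rfl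
    rw [hi] at hax
    cases hax
  | succ N ih =>
    intro Al k hlen hch hhead
    rcases List.eq_nil_or_concat Al with rfl | ⟨A', a, rfl⟩
    · simp at hlen
    · rw [List.concat_eq_append] at *
      have hch' := hch
      rw [List.append_assoc] at hch'
      unfold List.Chain' at hch'; rw [List.isChain_append] at hch'
      obtain ⟨hchA', hch2, hlink⟩ := hch'
      have hchAa : List.Chain' (Triggers ρ) (A' ++ [a]) :=
        (List.isChain_append.mp hch).1
      have htr : Triggers ρ a k := by
        refine (List.isChain_append.mp hch).2.2 a ?_ k rfl
        rw [List.getLast?_concat]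
        rfl
      rw [bwd_eq_of_trig htr]
      congr 1
      refine ih A' a (by simpa using hlen) hchAa ?_
      intro h hh
      apply hhead
      have hne : A' ++ [a] ≠ [] := by simp
      rw [List.head?_append_of_ne_nil _ hne]
      exact hh

/-- The canonical block containing `k`. -/
noncomputable def blockOf (ρ : TimedRun A n) (k : Fin n) : List (Fin n) :=
  bwd ρ k ++ fwd ρ k

lemma mem_blockOf (ρ : TimedRun A n) (k : Fin n) : k ∈ blockOf ρ k := by
  obtain ⟨t, ht⟩ := fwd_cons ρ k
  rw [blockOf, ht]
  simp

lemma blockOf_getLast? (ρ : TimedRun A n) (k : Fin n) :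
    (blockOf ρ k).getLast? = (fwd ρ k).getLast? := by
  rw [blockOf, List.getLast?_append_of_ne_nil _ (fwd_ne_nil ρ k)]

lemma blockOf_chain (ρ : TimedRun A n) (k : Fin n) :
    List.Chain' (Triggers ρ) (blockOf ρ k) := by
  unfold List.Chain'; rw [blockOf, List.isChain_append]
  have hb := bwd_chain_app ρ k
  unfold List.Chain' at hb; rw [List.isChain_append] at hb
  refine ⟨hb.1, fwd_chain ρ k, ?_⟩
  intro a ha b hb'
  rw [fwd_head ρ k] at hb'
  cases hb'
  exact hb.2.2 a ha k rfl

lemma blockOf_head (ρ : TimedRun A n) (k : Fin n) :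
    (blockOf ρ k).head? = (bwd ρ k ++ [k]).head? := by
  rw [blockOf]
  rcases List.eq_nil_or_concat (bwd ρ k) with h | ⟨l', a, h⟩
  · rw [h]
    obtain ⟨t, ht⟩ := fwd_cons ρ k
    rw [ht]; simp
  · have hne : bwd ρ k ≠ [] := by rw [h]; simp
    rw [List.head?_append_of_ne_nil _ hne, List.head?_append_of_ne_nil _ hne]

open Classical in
/-- Canonical fate, given the last action index of a block. -/
noncomputable def fate (ρ : TimedRun A n) (k : Fin n) : Fate :=
  match ρ.upds k with
  | none => Fate.bot
  | some (x, _) => if DiscardedAtZeroAfter ρ k x then Fate.disc0 else Fate.cross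

lemma fateOf_fate (ρ : TimedRun A n) (ks : List (Fin n)) (l : Fin n)
    (hl : ks.getLast? = some l) : FateOf ρ ks (fate ρ l) := by
  intro k hk
  rw [hl, Option.some.injEq] at hk
  subst hk
  constructor
  · intro hnone
    unfold fate
    rw [hnone]
  · intro x c hsome
    constructor
    · intro hd
      unfold fate
      rw [hsome]
      simp only [if_pos hd]
    · intro hnd
      unfold fate
      rw [hsome]
      simp only [if_neg hnd]

lemma fate_unique (ρ : TimedRun A n) (ks : List (Fin n)) (γ γ' : Fate)
    (hne : ks ≠ []) (h1 : FateOf ρ ks γ) (h2 : FateOf ρ ks γ') : γ = γ' := by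
  obtain ⟨l, hl⟩ : ∃ l, ks.getLast? = some l := by
    cases hk : ks.getLast? with
    | none => exact absurd (List.getLast?_eq_none_iff.mp hk) hne
    | some l => exact ⟨l, rfl⟩
  have H1 := h1 l hl
  have H2 := h2 l hl
  cases hu : ρ.upds l with
  | none => rw [H1.1 hu, H2.1 hu]
  | some p =>
    obtain ⟨x, c⟩ := p
    by_cases hd : DiscardedAtZeroAfter ρ l x
    · rw [(H1.2 x c hu).1 hd, (H2.2 x c hu).1 hd]
    · rw [(H1.2 x c hu).2 hd, (H2.2 x c hu).2 hd]

lemma blockOf_isBlock (ρ : TimedRun A n) (k : Fin n) (l : Fin n)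
    (hl : (blockOf ρ k).getLast? = some l) :
    IsBlock ρ (blockOf ρ k) (fate ρ l) := by
  refine ⟨?_, blockOf_chain ρ k, ?_, ?_, fateOf_fate ρ _ l hl⟩
  · rw [blockOf]
    simp [fwd_ne_nil ρ k]
  · intro h hh
    rw [blockOf_head] at hh
    exact bwd_head_input ρ k h hh
  · intro a k' ha
    rw [blockOf_getLast?] at ha
    exact fwd_last_max ρ k a ha k'
  
lemma block_eq (ρ : TimedRun A n) (ks : List (Fin n)) (γ : Fate)
    (hb : IsBlock ρ ks γ) (k : Fin n) (hk : k ∈ ks) : ks = blockOf ρ k := by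
  obtain ⟨hne, hch, hhead, hmax, -⟩ := hb
  obtain ⟨Al, B, rfl⟩ := List.append_of_mem hk
  have hchB : List.Chain' (Triggers ρ) (k :: B) := (List.isChain_append.mp hch).2.1
  have hlast : (Al ++ k :: B).getLast? = (k :: B).getLast? :=
    List.getLast?_append_of_ne_nil _ (by simp)
  have h1 : k :: B = fwd ρ k := by
    refine fwd_canonical ρ B k hchB ?_
    intro l hl k'
    exact hmax l k' (by rw [hlast]; exact hl)
  have hchA : List.Chain' (Triggers ρ) (Al ++ [k]) := by
    have : Al ++ k :: B = (Al ++ [k]) ++ B := by simp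
    rw [this] at hch
    exact (List.isChain_append.mp hch).1
  have h2 : Al = bwd ρ k := by
    refine bwd_canonical ρ Al.length Al k rfl hchA ?_
    intro h hh
    apply hhead
    rcases List.eq_nil_or_concat Al with rfl | ⟨A', a, rfl⟩
    · simp at hh ⊢
      exact hh
    · rw [List.concat_eq_append] at *
      have hne' : A' ++ [a] ≠ [] := by simp
      rw [List.head?_append_of_ne_nil _ hne'] at hh
      rw [List.head?_append_of_ne_nil _ hne']
      exact hh
  rw [blockOf, ← h1, ← h2]

end AwT

/-- The index sequences of the blocks of a padded timed run `ρ` form a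
partition of the set of indices of the actions of `ρ`: every action index belongs to the
sequence of exactly one block. -/
theorem blocks_partition {X I Q : Type} [DecidableEq X] [Fintype X] [Fintype I] [Fintype Q]
    (A : AwT.AT X I Q) (n : ℕ) (ρ : AwT.TimedRun A n) (hρ : AwT.Padded ρ) (k : Fin n) :
    ∃! B : List (Fin n) × AwT.Fate, AwT.IsBlock ρ B.1 B.2 ∧ k ∈ B.1 := by
  classical
  obtain ⟨l, hl⟩ : ∃ l, (AwT.blockOf ρ k).getLast? = some l := by
    cases hk : (AwT.blockOf ρ k).getLast? with
    | none =>
      exfalso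
      have := List.getLast?_eq_none_iff.mp hk
      rw [AwT.blockOf] at this
      simp [AwT.fwd_ne_nil ρ k] at this
    | some l => exact ⟨l, rfl⟩
  refine ⟨(AwT.blockOf ρ k, AwT.fate ρ l),
    ⟨AwT.blockOf_isBlock ρ k l hl, AwT.mem_blockOf ρ k⟩, ?_⟩
  rintro ⟨ks, γ⟩ ⟨hb, hk⟩
  have hks : ks = AwT.blockOf ρ k := AwT.block_eq ρ ks γ hb k hk
  subst hks
  have hγ : γ = AwT.fate ρ l := by
    refine AwT.fate_unique ρ _ γ _ ?_ hb.2.2.2.2 (AwT.fateOf_fate ρ _ l hl)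
    rw [AwT.blockOf]
    simp [AwT.fwd_ne_nil ρ k]
  rw [hγ]
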